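/- Let r ≥ 1 and let M be an r × r matrix with entries in ℂ[z] such that N = M(0) satisfies N² = 0 and rank(N) ≤ 1. Write the characteristic polynomial of M as det(X·1_r − M) = X^r + c_1(z) X^{r−1} + … + c_r(z) with c_i ∈ ℂ[z]. Then for every i with 2 ≤ i ≤ r, the coefficient c_i(z) is divisible by z^{⌊(i+1)/2⌋} in ℂ[z]. Equivalently, near a marked point the spectral curve has equation λ^r + Σ_{i=2}^r z^{⌊(i+1)/2⌋} a_i(z) λ^{r−i} = 0 with the a_i polynomial. -/

import Mathlib

open Polynomial Matrix

/-- Rank-one update formula for determinants (multilinear expansion): all terms with at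
least two rows from the rank-one matrix vanish. -/
private lemma det_add_outer {n : Type*} [DecidableEq n] [Fintype n] {R : Type*} [CommRing R]
    (B : Matrix n n R) (a b : n → R) :
    (B + Matrix.of fun i j => a i * b j).det
      = B.det + ∑ i, a i * (B.updateRow i b).det := by
  classical
  let f : (n → R) [⋀^n]→ₗ[R] R := Matrix.detRowAlternating
  have hdet : ∀ C : Matrix n n R, C.det = f C := fun _ => rfl
  have hsplit : ((B + Matrix.of fun i j => a i * b j) : Matrix n n R)
      = ((fun i => B i) + fun i => a i • b : n → n → R) := by
    funext i j
    simp [Matrix.add_apply, smul_eq_mul]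
  rw [hdet, hsplit]
  have hexp : f ((fun i => B i) + fun i => a i • b)
      = ∑ s : Finset n, f (s.piecewise (fun i => B i) (fun i => a i • b)) := by
    simpa using f.toMultilinearMap.map_add_univ (fun i => B i) (fun i => a i • b)
  rw [hexp]
  -- replace each s by its complement
  have hre : ∑ s : Finset n, f (s.piecewise (fun i => B i) (fun i => a i • b))
      = ∑ t : Finset n, f (t.piecewise (fun i => a i • b) (fun i => B i)) := by
    refine Fintype.sum_bijective (Compl.compl : Finset n → Finset n) compl_involutive.bijective _ _ fun s => ?_
    rw [Finset.piecewise_compl]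
  rw [hre]
  set g : Finset n → R := fun t => f (t.piecewise (fun i => a i • b) (fun i => B i)) with hg
  set S₀ : Finset (Finset n) := insert ∅ ((Finset.univ : Finset n).image fun i => ({i} : Finset n))
    with hS₀
  have hzero : ∀ t : Finset n, t ∉ S₀ → g t = 0 := by
    intro t ht
    have h1 : t ≠ ∅ := by
      intro h; exact ht (by simp [hS₀, h])
    have h2 : t.card ≠ 1 := by
      intro h
      obtain ⟨x, hx⟩ := Finset.card_eq_one.mp h
      exact ht (by simp [hS₀, hx])
    have hlt : 1 < t.card := by
      have hcard : t.card ≠ 0 := fun h => h1 (Finset.card_eq_zero.mp h)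
      omega
    obtain ⟨x, hx, y, hy, hxy⟩ := Finset.one_lt_card.mp hlt
    set vv := t.piecewise (fun i => a i • b) (fun i => B i) with hvv
    have hvx : vv x = a x • b := Finset.piecewise_eq_of_mem _ _ _ hx
    have step1 : f vv = a x • f (Function.update vv x b) := by
      conv_lhs => rw [← Function.update_eq_self x vv, hvx]
      rw [AlternatingMap.map_update_smul]
    have hvy : Function.update vv x b y = a y • b := by
      rw [Function.update_of_ne (Ne.symm hxy)]
      exact Finset.piecewise_eq_of_mem _ _ _ hy
    have step2 : f (Function.update vv x b)
        = a y • f (Function.update (Function.update vv x b) y b) := by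
      conv_lhs => rw [← Function.update_eq_self y (Function.update vv x b), hvy]
      rw [AlternatingMap.map_update_smul]
    have step3 : f (Function.update (Function.update vv x b) y b) = 0 := by
      apply AlternatingMap.map_eq_zero_of_eq _ _ _ hxy
      rw [Function.update_of_ne hxy, Function.update_self, Function.update_self]
    rw [hg]
    dsimp only
    rw [step1, step2, step3, smul_zero, smul_zero]
  have hsub : ∑ t : Finset n, g t = ∑ t ∈ S₀, g t :=
    (Finset.sum_subset (Finset.subset_univ _) (fun t _ ht => hzero t ht)).symm
  have hempty : (∅ : Finset n) ∉ (Finset.univ : Finset n).image fun i => ({i} : Finset n) := by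
    simp
  rw [hsub, hS₀, Finset.sum_insert hempty,
    Finset.sum_image (fun i _ j _ h => Finset.singleton_injective h)]
  have hg0 : g ∅ = B.det := by
    rw [hg]; dsimp only
    rw [Finset.piecewise_empty]
    rfl
  have hg1 : ∀ x : n, g {x} = a x * (B.updateRow x b).det := by
    intro x
    rw [hg]; dsimp only
    rw [Finset.piecewise_singleton, AlternatingMap.map_update_smul, smul_eq_mul]
    rfl
  rw [hg0]
  exact congrArg (B.det + ·) (Finset.sum_congr rfl fun x _ => hg1 x)

/-- Coefficients after the substitution `X ↦ z • X`. -/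
private lemma coeff_eval₂_C_mul_X {R : Type*} [CommRing R] (z : R) (p : Polynomial R) (m : ℕ) :
    (Polynomial.eval₂ Polynomial.C (Polynomial.C z * Polynomial.X) p).coeff m
      = p.coeff m * z ^ m := by
  induction p using Polynomial.induction_on' with
  | add p q hp hq => simp [hp, hq, add_mul]
  | monomial n aa =>
    rw [Polynomial.eval₂_monomial, mul_pow, ← Polynomial.C_pow, ← mul_assoc,
      ← Polynomial.C_mul, Polynomial.coeff_C_mul, Polynomial.coeff_X_pow,
      Polynomial.coeff_monomial]
    by_cases h : n = m
    · subst h; simp [mul_comm]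
    · simp [h, Ne.symm h]

theorem charpoly_coeff_vanishing_min_nilpotent (r : ℕ) (hr : 1 ≤ r)
    (M : Matrix (Fin r) (Fin r) (Polynomial ℂ))
    (hsq : (M.map (fun q => q.eval 0)) ^ 2 = 0)
    (hrk : (M.map (fun q => q.eval 0)).rank ≤ 1) :
    ∀ i : ℕ, 2 ≤ i → i ≤ r →
      (Polynomial.X : Polynomial ℂ) ^ ((i + 1) / 2) ∣ (Matrix.charpoly M).coeff (r - i) := by
  intro i hi2 hir
  classical
  -- Step 1: the residue matrix is an outer product
  obtain ⟨u, v, huv⟩ : ∃ u v : Fin r → ℂ, ∀ a b, (M a b).eval 0 = u a * v b := by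
    set N := M.map fun q => q.eval 0 with hNdef
    have h1 : Module.finrank ℂ ↥(LinearMap.range N.mulVecLin) ≤ 1 := hrk
    obtain ⟨w0, hw0⟩ := finrank_le_one_iff.mp h1
    choose c hc using fun b : Fin r =>
      hw0 ⟨N.mulVecLin (Pi.single b 1), LinearMap.mem_range_self _ _⟩
    refine ⟨fun a => (w0 : Fin r → ℂ) a, c, fun a b => ?_⟩
    have h2 := congrFun (congrArg (Subtype.val) (hc b)) a
    simp only [Submodule.coe_smul, Pi.smul_apply, smul_eq_mul,
      Matrix.mulVecLin_apply, Matrix.mulVec_single, mul_one,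
      MulOpposite.op_one, one_smul, Matrix.col_apply] at h2
    have : N a b = (M a b).eval 0 := by simp [hNdef, Matrix.map_apply]
    rw [← this, ← h2]
    ring
  -- Step 2: decompose entries as z·D + constant
  set D : Matrix (Fin r) (Fin r) (Polynomial ℂ) := Matrix.of fun a b => (M a b).divX with hD
  have hM : ∀ a b, M a b = Polynomial.X * D a b + Polynomial.C (u a * v b) := by
    intro a b
    conv_lhs => rw [← Polynomial.X_mul_divX_add (M a b)]
    rw [Polynomial.coeff_zero_eq_eval_zero, huv a b]
    rfl
  set w : Fin r → Polynomial (Polynomial ℂ) :=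
    fun b => Polynomial.C (Polynomial.C (v b)) with hwdef
  set E : Matrix (Fin r) (Fin r) (Polynomial (Polynomial ℂ)) :=
    Matrix.of fun a b => (if a = b then (Polynomial.X : Polynomial (Polynomial ℂ)) else 0)
      - Polynomial.C (Polynomial.X * D a b) with hE
  have hchar : charmatrix M = E + Matrix.of fun a b =>
      Polynomial.C (Polynomial.C (-u a)) * w b := by
    refine Matrix.ext fun a b => ?_
    by_cases h : a = b
    · subst h
      rw [Matrix.charmatrix_apply_eq, hM a a]
      simp only [hE, hwdef, Matrix.add_apply, Matrix.of_apply, if_pos rfl, eq_self_iff_true, if_true,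
        Polynomial.C_add, Polynomial.C_mul, Polynomial.C_neg]
      ring
    · rw [Matrix.charmatrix_apply_ne _ _ _ h, hM a b]
      simp only [hE, hwdef, Matrix.add_apply, Matrix.of_apply, if_neg h,
        Polynomial.C_add, Polynomial.C_mul, Polynomial.C_neg]
      ring
  have hL : Matrix.charpoly M
      = E.det + ∑ a, Polynomial.C (Polynomial.C (-u a)) * (E.updateRow a w).det := by
    rw [Matrix.charpoly, hchar, det_add_outer]
  -- Step 3: the substitution X ↦ z·X
  set φ : Polynomial (Polynomial ℂ) →+* Polynomial (Polynomial ℂ) :=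
    Polynomial.eval₂RingHom (Polynomial.C : Polynomial ℂ →+* Polynomial (Polynomial ℂ))
      (Polynomial.C Polynomial.X * Polynomial.X) with hφ
  have hφC : ∀ p : Polynomial ℂ, φ (Polynomial.C p) = Polynomial.C p := fun p => by
    simp [hφ]
  have hφX : φ Polynomial.X = Polynomial.C Polynomial.X * Polynomial.X := by
    simp [hφ]
  have hφcoeff : ∀ (p : Polynomial (Polynomial ℂ)) (m : ℕ),
      (φ p).coeff m = p.coeff m * Polynomial.X ^ m := fun p m => by
    rw [hφ, Polynomial.coe_eval₂RingHom]
    exact coeff_eval₂_C_mul_X _ p m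
  set E' : Matrix (Fin r) (Fin r) (Polynomial (Polynomial ℂ)) :=
    Matrix.of fun a b => (if a = b then (Polynomial.X : Polynomial (Polynomial ℂ)) else 0)
      - Polynomial.C (D a b) with hE'
  have hmapE : ∀ a b, φ (E a b) = Polynomial.C Polynomial.X * E' a b := by
    intro a b
    rw [hE, hE']
    simp only [Matrix.of_apply]
    rw [map_sub]
    by_cases h : a = b
    · simp only [if_pos h]
      rw [hφX, hφC, Polynomial.C_mul]
      ring
    · simp only [if_neg h]
      rw [map_zero, hφC, Polynomial.C_mul]
      ring
  -- Claim 1: z^i divides the coefficient of det E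
  have key1 : ∃ e : Polynomial ℂ, E.det.coeff (r - i) = Polynomial.X ^ i * e := by
    have hdetE : φ E.det = (Polynomial.C Polynomial.X) ^ r * E'.det := by
      rw [RingHom.map_det, RingHom.mapMatrix_apply]
      have : E.map ⇑φ = (Polynomial.C Polynomial.X : Polynomial (Polynomial ℂ)) • E' := by
        refine Matrix.ext fun a b => ?_
        rw [Matrix.map_apply, hmapE, Matrix.smul_apply, smul_eq_mul]
      rw [this, Matrix.det_smul, Fintype.card_fin]
    have h1 : E.det.coeff (r - i) * Polynomial.X ^ (r - i)
        = Polynomial.X ^ r * E'.det.coeff (r - i) := by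
      rw [← hφcoeff, hdetE, ← Polynomial.C_pow, Polynomial.coeff_C_mul]
    refine ⟨E'.det.coeff (r - i), ?_⟩
    have hsplitpow : (Polynomial.X : Polynomial ℂ) ^ r
        = Polynomial.X ^ (r - i) * Polynomial.X ^ i := by
      rw [← pow_add]; congr 1; omega
    rw [hsplitpow, mul_assoc, mul_comm (E.det.coeff (r - i))] at h1
    exact mul_left_cancel₀ (pow_ne_zero (r - i) Polynomial.X_ne_zero) h1
  -- Claim 2: z^(i-1) divides the coefficient of each updated determinant
  have key2 : ∀ a0 : Fin r, ∃ e : Polynomial ℂ,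
      (E.updateRow a0 w).det.coeff (r - i) = Polynomial.X ^ (i - 1) * e := by
    intro a0
    have hmap : (E.updateRow a0 w).map ⇑φ
        = Matrix.of fun a b => (if a = a0 then 1 else Polynomial.C Polynomial.X)
            * (E'.updateRow a0 w) a b := by
      refine Matrix.ext fun a b => ?_
      by_cases h : a = a0
      · subst h
        rw [Matrix.map_apply, Matrix.updateRow_self, Matrix.of_apply, if_pos rfl,
          Matrix.updateRow_self, one_mul, hwdef]
        exact hφC _
      · rw [Matrix.map_apply, Matrix.updateRow_ne h, Matrix.of_apply, if_neg h,
          Matrix.updateRow_ne h]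
        exact hmapE a b
    have hprod : (∏ a : Fin r, (if a = a0 then (1 : Polynomial (Polynomial ℂ))
          else Polynomial.C Polynomial.X))
        = (Polynomial.C Polynomial.X : Polynomial (Polynomial ℂ)) ^ (r - 1) := by
      rw [← Finset.mul_prod_erase Finset.univ _ (Finset.mem_univ a0), if_pos rfl, one_mul]
      rw [Finset.prod_congr rfl (fun x hx => if_neg (Finset.ne_of_mem_erase hx)),
        Finset.prod_const, Finset.card_erase_of_mem (Finset.mem_univ a0), Finset.card_univ,
        Fintype.card_fin]
    have hdet2 : φ (E.updateRow a0 w).det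
        = (Polynomial.C Polynomial.X) ^ (r - 1) * (E'.updateRow a0 w).det := by
      rw [RingHom.map_det, RingHom.mapMatrix_apply, hmap, Matrix.det_mul_column, hprod]
    have h1 : (E.updateRow a0 w).det.coeff (r - i) * Polynomial.X ^ (r - i)
        = Polynomial.X ^ (r - 1) * (E'.updateRow a0 w).det.coeff (r - i) := by
      rw [← hφcoeff, hdet2, ← Polynomial.C_pow, Polynomial.coeff_C_mul]
    refine ⟨(E'.updateRow a0 w).det.coeff (r - i), ?_⟩
    have hsplitpow : (Polynomial.X : Polynomial ℂ) ^ (r - 1)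
        = Polynomial.X ^ (r - i) * Polynomial.X ^ (i - 1) := by
      rw [← pow_add]; congr 1; omega
    rw [hsplitpow, mul_assoc, mul_comm ((E.updateRow a0 w).det.coeff (r - i))] at h1
    exact mul_left_cancel₀ (pow_ne_zero (r - i) Polynomial.X_ne_zero) h1
  -- Combine
  refine dvd_trans (pow_dvd_pow (Polynomial.X : Polynomial ℂ) (by omega : (i + 1) / 2 ≤ i - 1)) ?_
  rw [hL, Polynomial.coeff_add, Polynomial.finset_sum_coeff]
  apply dvd_add
  · obtain ⟨e, he⟩ := key1
    rw [he]
    exact Dvd.dvd.mul_right (pow_dvd_pow _ (by omega)) e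
  · refine Finset.dvd_sum fun a _ => ?_
    rw [Polynomial.coeff_C_mul]
    obtain ⟨e, he⟩ := key2 a
    rw [he]
    exact Dvd.dvd.mul_left (Dvd.dvd.mul_right dvd_rfl e) _
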